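/- With notation as in the Type 1 structure equations: suppose λ, α, β are smooth real functions on a 2-manifold with frame vector fields E₁, E₂ satisfying E₁(λ) = -αλ, E₂(λ) = 0, [E₁,E₂] = ∇_{E₁}E₂ - ∇_{E₂}E₁ = -αE₂ + βE₁ with β = 0, and λ is nowhere zero. Then E₂(α) = 0. -/
import Mathlib


/-- Lemma 5.2 (first part), Type 1: with E₁(λ) = -αλ, E₂(λ) = 0, β = 0 and
[E₁,E₂] = -αE₂, and λ nowhere zero, one gets E₂(α) = 0.  Vector fields are
modeled as derivations on real-valued functions. -/
theorem stmt_5 (M : Type*)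
    (E₁ E₂ : (M → ℝ) →ₗ[ℝ] (M → ℝ))
    (hE₁Leib : ∀ f g : M → ℝ, E₁ (f * g) = E₁ f * g + f * E₁ g)
    (hE₂Leib : ∀ f g : M → ℝ, E₂ (f * g) = E₂ f * g + f * E₂ g)
    (α lam : M → ℝ)
    (hlam1 : E₁ lam = -(α * lam))
    (hlam2 : E₂ lam = 0)
    (hbracket : ∀ f : M → ℝ, E₁ (E₂ f) - E₂ (E₁ f) = -(α * E₂ f))
    (hlamne : ∀ p : M, lam p ≠ 0) :
    E₂ α = 0 := by
  have h := hbracket lam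
  rw [hlam2, hlam1, map_zero, map_neg, hE₂Leib] at h
  -- h : 0 - -(E₂ α * lam + α * E₂ lam) = -(α * 0)
  rw [hlam2] at h
  have h2 : E₂ α * lam = 0 := by
    have := h
    ring_nf at this ⊢
    linear_combination this
  funext p
  have := congrFun h2 p
  simp only [Pi.mul_apply, Pi.zero_apply] at this ⊢
  exact (mul_eq_zero.1 this).resolve_right (hlamne p)
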